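/- If F is a family of k-element subsets of [n] with ν(F) = s, then s·|∂F| ≥ |F|, where ∂F := { G : G is a (k−1)-element subset of [n] and G ⊂ F for some F ∈ F } is the shadow of F. -/

import Mathlib

open Finset
open scoped FinsetFamily

namespace Frankl21


/-- A family is shifted if replacing any element by a smaller absent one stays in the family. -/
def Shifted (F : Finset (Finset ℕ)) : Prop :=
  ∀ A ∈ F, ∀ j ∈ A, ∀ i < j, i ∉ A → insert i (A.erase j) ∈ F

lemma compress_eq_of (i j : ℕ) (hij : i ≠ j) (A : Finset ℕ) (hj : j ∈ A) (hi : i ∉ A) :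
    UV.compress ({i} : Finset ℕ) {j} A = insert i (A.erase j) := by
  rw [UV.compress_of_disjoint_of_le (by simpa using hi) (by simpa using hj)]
  ext b
  simp only [sup_eq_union, mem_sdiff, mem_union, mem_singleton, mem_insert, mem_erase]
  constructor
  · rintro ⟨hb1 | rfl, hb2⟩
    · exact Or.inr ⟨hb2, hb1⟩
    · exact Or.inl rfl
  · rintro (rfl | ⟨hb1, hb2⟩)
    · exact ⟨Or.inr rfl, hij⟩
    · exact ⟨Or.inl hb2, hb1⟩

lemma compress_cases (i j : ℕ) (A : Finset ℕ) :
    UV.compress ({i} : Finset ℕ) {j} A = A ∨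
      (i ∉ A ∧ j ∈ A ∧ UV.compress ({i} : Finset ℕ) {j} A = insert i (A.erase j)) := by
  by_cases hj : j ∈ A
  · by_cases hi : i ∈ A
    · left
      unfold UV.compress
      rw [if_neg]
      rintro ⟨h, -⟩
      exact (by simpa using h : i ∉ A) hi
    · by_cases hij : i = j
      · subst hij; exact absurd hj hi
      · exact Or.inr ⟨hi, hj, compress_eq_of i j hij A hj hi⟩
  · left
    unfold UV.compress
    rw [if_neg]
    rintro ⟨-, h⟩
    exact hj (by simpa using h)



lemma pd_insert {B : Finset ℕ} {R : Finset (Finset ℕ)}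
    (hR : (R : Set (Finset ℕ)).PairwiseDisjoint id)
    (hB : ∀ C ∈ R, Disjoint B C) :
    ((insert B R : Finset (Finset ℕ)) : Set (Finset ℕ)).PairwiseDisjoint id := by
  intro a ha b hb hab
  simp only [coe_insert, Set.mem_insert_iff, mem_coe] at ha hb
  rcases ha with rfl | ha <;> rcases hb with rfl | hb
  · exact absurd rfl hab
  · exact hB _ hb
  · exact (hB _ ha).symm
  · exact hR ha hb hab

lemma matching_compression {i j : ℕ} (hij : i ≠ j) (F M : Finset (Finset ℕ))
    (hM : M ⊆ UV.compression ({i} : Finset ℕ) {j} F)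
    (hd : (M : Set (Finset ℕ)).PairwiseDisjoint id) :
    ∃ M' ⊆ F, (M' : Set (Finset ℕ)).PairwiseDisjoint id ∧ M'.card = M.card := by
  by_cases hall : ∀ B ∈ M, B ∈ F
  · exact ⟨M, fun B hB => hall B hB, hd, rfl⟩
  · push_neg at hall
    obtain ⟨B₂, hB₂M, hB₂F⟩ := hall
    have hB₂C := hM hB₂M
    have hiB₂ : i ∈ B₂ := by
      simpa using UV.le_of_mem_compression_of_notMem hB₂C hB₂F
    have hjB₂ : j ∉ B₂ := by
      simpa using UV.disjoint_of_mem_compression_of_notMem hB₂C hB₂F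
    have hB₂' : (B₂ ⊔ {j}) \ {i} ∈ F :=
      UV.sup_sdiff_mem_of_mem_compression_of_notMem hB₂C hB₂F
    set B₂' : Finset ℕ := (B₂ ⊔ {j}) \ {i} with hB₂'def
    have hmem₂ : ∀ b, b ∈ B₂' ↔ (b ∈ B₂ ∨ b = j) ∧ b ≠ i := by
      intro b; simp [hB₂'def, sup_eq_union]; tauto
    -- facts about other members of M
    have hiC : ∀ C ∈ M, C ≠ B₂ → i ∉ C := by
      intro C hC hCB₂ hiC
      exact disjoint_left.1 (hd (by exact_mod_cast hC) (by exact_mod_cast hB₂M) hCB₂) hiC hiB₂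
    have hCF : ∀ C ∈ M, C ≠ B₂ → C ∈ F := by
      intro C hC hCB₂
      by_contra hCF
      exact hiC C hC hCB₂ (by simpa using UV.le_of_mem_compression_of_notMem (hM hC) hCF)
    have hdisj2 : ∀ C ∈ M, C ≠ B₂ → j ∉ C → Disjoint B₂' C := by
      intro C hC hne hjC
      rw [disjoint_left]
      intro b hb hbC
      rcases (hmem₂ b).1 hb with ⟨hb1 | rfl, -⟩
      · exact disjoint_left.1 (hd (by exact_mod_cast hB₂M) (by exact_mod_cast hC) hne.symm) hb1 hbC
      · exact hjC hbC
    by_cases hex : ∃ B₁ ∈ M, j ∈ B₁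
    · obtain ⟨B₁, hB₁M, hjB₁⟩ := hex
      have hne : B₁ ≠ B₂ := fun h => hjB₂ (h ▸ hjB₁)
      have hiB₁ : i ∉ B₁ := hiC B₁ hB₁M hne
      have hB₁F : B₁ ∈ F :=
        UV.mem_of_mem_compression (hM hB₁M) (by simpa using hjB₁)
          (fun h => absurd h (by simp))
      have hB₁'mem : (B₁ ⊔ {i}) \ {j} ∈ F :=
        UV.sup_sdiff_mem_of_mem_compression (hM hB₁M) (by simpa using hjB₁)
          (by simpa using hiB₁)
      set B₁' : Finset ℕ := (B₁ ⊔ {i}) \ {j} with hB₁'def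
      have hmem₁ : ∀ b, b ∈ B₁' ↔ (b ∈ B₁ ∨ b = i) ∧ b ≠ j := by
        intro b; simp [hB₁'def, sup_eq_union]; tauto
      set R : Finset (Finset ℕ) := (M.erase B₁).erase B₂ with hRdef
      have hRfacts : ∀ C ∈ R, C ∈ M ∧ C ≠ B₁ ∧ C ≠ B₂ := by
        intro C hC
        simp only [hRdef, mem_erase] at hC
        exact ⟨hC.2.2, hC.2.1, hC.1⟩
      have hjC : ∀ C ∈ R, j ∉ C := by
        intro C hC hjC
        obtain ⟨hCM, hCB₁, -⟩ := hRfacts C hC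
        exact disjoint_left.1 (hd (by exact_mod_cast hCM) (by exact_mod_cast hB₁M) hCB₁) hjC hjB₁
      have hMeq : M = insert B₁ (insert B₂ R) := by
        rw [hRdef, insert_erase (mem_erase.2 ⟨hne.symm, hB₂M⟩), insert_erase hB₁M]
      have hiB₂' : i ∉ B₂' := fun h => (((hmem₂ i).1 h).2) rfl
      have hjB₁' : j ∉ B₁' := fun h => (((hmem₁ j).1 h).2) rfl
      have hiB₁' : i ∈ B₁' := (hmem₁ i).2 ⟨Or.inr rfl, hij⟩
      have hjB₂' : j ∈ B₂' := (hmem₂ j).2 ⟨Or.inr rfl, hij.symm⟩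
      have hB₂'R : B₂' ∉ R := fun h => hjC B₂' h hjB₂'
      have hB₁'I : B₁' ∉ insert B₂' R := by
        intro h
        rcases mem_insert.1 h with h | h
        · exact hiB₂' (h ▸ hiB₁')
        · exact hiC B₁' (hRfacts _ h).1 (hRfacts _ h).2.2 hiB₁'
      have hB₂R : B₂ ∉ R := fun h => (hRfacts _ h).2.2 rfl
      have hB₁I : B₁ ∉ insert B₂ R := by
        intro h
        rcases mem_insert.1 h with h | h
        · exact hne h
        · exact (hRfacts _ h).2.1 rfl
      have d12 : Disjoint B₁' B₂' := by
        rw [disjoint_left]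
        intro b hb1 hb2
        obtain ⟨hb1', hbj⟩ := (hmem₁ b).1 hb1
        obtain ⟨hb2', hbi⟩ := (hmem₂ b).1 hb2
        rcases hb1' with hb1' | rfl
        · rcases hb2' with hb2' | rfl
          · exact disjoint_left.1
              (hd (by exact_mod_cast hB₁M) (by exact_mod_cast hB₂M) hne) hb1' hb2'
          · exact hbj rfl
        · exact hbi rfl
      have d1C : ∀ C ∈ R, Disjoint B₁' C := by
        intro C hC
        rw [disjoint_left]
        intro b hb hbC
        obtain ⟨hb', -⟩ := (hmem₁ b).1 hb
        rcases hb' with hb' | rfl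
        · exact disjoint_left.1
            (hd (by exact_mod_cast hB₁M) (by exact_mod_cast (hRfacts _ hC).1)
              (Ne.symm (hRfacts _ hC).2.1)) hb' hbC
        · exact hiC C (hRfacts _ hC).1 (hRfacts _ hC).2.2 hbC
      have hRpd : (R : Set (Finset ℕ)).PairwiseDisjoint id := by
        refine hd.subset ?_
        intro C hC
        exact_mod_cast (hRfacts _ (by exact_mod_cast hC)).1
      refine ⟨insert B₁' (insert B₂' R), ?_, ?_, ?_⟩
      · intro C hC
        rcases mem_insert.1 hC with rfl | hC
        · exact hB₁'mem
        · rcases mem_insert.1 hC with rfl | hC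
          · exact hB₂'
          · exact hCF C (hRfacts _ hC).1 (hRfacts _ hC).2.2
      · refine pd_insert (pd_insert hRpd ?_) ?_
        · intro C hC
          exact hdisj2 C (hRfacts _ hC).1 (hRfacts _ hC).2.2 (hjC C hC)
        · intro C hC
          rcases mem_insert.1 hC with rfl | hC
          · exact d12
          · exact d1C C hC
      · rw [card_insert_of_notMem hB₁'I, card_insert_of_notMem hB₂'R, hMeq,
          card_insert_of_notMem hB₁I, card_insert_of_notMem hB₂R]
    · push_neg at hex
      set R : Finset (Finset ℕ) := M.erase B₂ with hRdef
      have hRfacts : ∀ C ∈ R, C ∈ M ∧ C ≠ B₂ := by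
        intro C hC
        simp only [hRdef, mem_erase] at hC
        exact ⟨hC.2, hC.1⟩
      have hMeq : M = insert B₂ R := by rw [hRdef, insert_erase hB₂M]
      have hjB₂' : j ∈ B₂' := (hmem₂ j).2 ⟨Or.inr rfl, hij.symm⟩
      have hB₂'R : B₂' ∉ R := fun h => hex B₂' (hRfacts _ h).1 hjB₂'
      have hB₂R : B₂ ∉ R := fun h => (hRfacts _ h).2 rfl
      have hRpd : (R : Set (Finset ℕ)).PairwiseDisjoint id := by
        refine hd.subset ?_
        intro C hC
        exact_mod_cast (hRfacts _ (by exact_mod_cast hC)).1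
      refine ⟨insert B₂' R, ?_, ?_, ?_⟩
      · intro C hC
        rcases mem_insert.1 hC with rfl | hC
        · exact hB₂'
        · exact hCF C (hRfacts _ hC).1 (hRfacts _ hC).2
      · refine pd_insert hRpd ?_
        intro C hC
        exact hdisj2 C (hRfacts _ hC).1 (hRfacts _ hC).2 (hex C (hRfacts _ hC).1)
      · rw [card_insert_of_notMem hB₂'R, hMeq, card_insert_of_notMem hB₂R]





noncomputable def fmeas (F : Finset (Finset ℕ)) : ℕ := ∑ A ∈ F, ∑ a ∈ A, a

lemma fmeas_lt {i j : ℕ} (hij : i < j) (F : Finset (Finset ℕ)) (A : Finset ℕ)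
    (hA : A ∈ F) (hj : j ∈ A) (hi : i ∉ A) (hAc : insert i (A.erase j) ∉ F) :
    fmeas (UV.compression ({i} : Finset ℕ) {j} F) < fmeas F := by
  classical
  have himg : {a ∈ F.image (UV.compress ({i} : Finset ℕ) {j}) | a ∉ F} =
      (F.filter fun B => UV.compress ({i} : Finset ℕ) {j} B ∉ F).image
        (UV.compress ({i} : Finset ℕ) {j}) := by
    ext B'
    simp only [mem_filter, mem_image]
    constructor
    · rintro ⟨⟨B, hB, rfl⟩, hB'⟩
      exact ⟨B, ⟨hB, hB'⟩, rfl⟩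
    · rintro ⟨B, ⟨hB, hB'⟩, rfl⟩
      exact ⟨⟨B, hB, rfl⟩, hB'⟩
  have hinj : Set.InjOn (UV.compress ({i} : Finset ℕ) {j})
      ↑(F.filter fun B => UV.compress ({i} : Finset ℕ) {j} B ∉ F) := by
    refine Set.InjOn.mono ?_
      (UV.compress_injOn (u := ({i} : Finset ℕ)) (v := ({j} : Finset ℕ)) (s := F))
    intro B hB
    simp only [coe_filter, Set.mem_setOf_eq, Set.mem_sep_iff, mem_coe] at hB ⊢
    exact hB
  have hsum : fmeas (UV.compression ({i} : Finset ℕ) {j} F) =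
      ∑ B ∈ F.filter (fun B => UV.compress ({i} : Finset ℕ) {j} B ∈ F), ∑ a ∈ B, a +
      ∑ B ∈ F.filter (fun B => UV.compress ({i} : Finset ℕ) {j} B ∉ F),
        ∑ a ∈ UV.compress ({i} : Finset ℕ) {j} B, a := by
    rw [fmeas, UV.compression, sum_union UV.compress_disjoint, himg, sum_image hinj]
  have hQne : A ∈ F.filter (fun B => UV.compress ({i} : Finset ℕ) {j} B ∉ F) := by
    rw [mem_filter, compress_eq_of i j hij.ne A hj hi]
    exact ⟨hA, hAc⟩
  have hlt : ∑ B ∈ F.filter (fun B => UV.compress ({i} : Finset ℕ) {j} B ∉ F),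
        ∑ a ∈ UV.compress ({i} : Finset ℕ) {j} B, a <
      ∑ B ∈ F.filter (fun B => UV.compress ({i} : Finset ℕ) {j} B ∉ F), ∑ a ∈ B, a := by
    refine sum_lt_sum_of_nonempty ⟨A, hQne⟩ ?_
    intro B hB
    rw [mem_filter] at hB
    rcases compress_cases i j B with hcB | ⟨hiB, hjB, hcB⟩
    · rw [hcB] at hB; exact absurd hB.1 hB.2
    · rw [hcB, sum_insert (fun h => hiB (mem_of_mem_erase h))]
      have h1 : ∑ a ∈ B.erase j, a + j = ∑ a ∈ B, a := Finset.sum_erase_add _ _ hjB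
      omega
  calc fmeas (UV.compression ({i} : Finset ℕ) {j} F)
      < ∑ B ∈ F.filter (fun B => UV.compress ({i} : Finset ℕ) {j} B ∈ F), ∑ a ∈ B, a +
        ∑ B ∈ F.filter (fun B => UV.compress ({i} : Finset ℕ) {j} B ∉ F), ∑ a ∈ B, a := by
        rw [hsum]; exact Nat.add_lt_add_left hlt _
    _ = fmeas F := by rw [fmeas, sum_filter_add_sum_filter_not]








lemma exists_shifted_aux (n k : ℕ) : ∀ (m : ℕ) (F : Finset (Finset ℕ)), fmeas F ≤ m →
    F ⊆ (range n).powersetCard k →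
    ∃ F', F' ⊆ (range n).powersetCard k ∧ Shifted F' ∧ F'.card = F.card ∧
      (∂ F').card ≤ (∂ F).card ∧
      ∀ M ⊆ F', (M : Set (Finset ℕ)).PairwiseDisjoint id →
        ∃ M' ⊆ F, (M' : Set (Finset ℕ)).PairwiseDisjoint id ∧ M'.card = M.card := by
  intro m
  induction m with
  | zero =>
    intro F hm hF
    by_cases hsh : Shifted F
    · exact ⟨F, hF, hsh, rfl, le_refl _, fun M hM hd => ⟨M, hM, hd, rfl⟩⟩
    · exfalso
      unfold Shifted at hsh
      push_neg at hsh
      obtain ⟨A, hA, j, hj, i, hilt, hiA, hAc⟩ := hsh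
      have := fmeas_lt hilt F A hA hj hiA hAc
      omega
  | succ m ih =>
    intro F hm hF
    by_cases hsh : Shifted F
    · exact ⟨F, hF, hsh, rfl, le_refl _, fun M hM hd => ⟨M, hM, hd, rfl⟩⟩
    · unfold Shifted at hsh
      push_neg at hsh
      obtain ⟨A, hA, j, hj, i, hilt, hiA, hAc⟩ := hsh
      have hlt := fmeas_lt hilt F A hA hj hiA hAc
      set F₁ := UV.compression ({i} : Finset ℕ) {j} F with hF₁def
      have hsub : F₁ ⊆ (range n).powersetCard k := by
        intro B hB
        rcases (UV.mem_compression).1 hB with ⟨hBF, -⟩ | ⟨-, B₀, hB₀, rfl⟩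
        · exact hF hBF
        · rcases compress_cases i j B₀ with hcB | ⟨hi₀, hj₀, heq⟩
          · rw [hcB]; exact hF hB₀
          · rw [heq]
            obtain ⟨hB₀sub, hB₀card⟩ := mem_powersetCard.1 (hF hB₀)
            rw [mem_powersetCard]
            constructor
            · intro b hb
              rcases mem_insert.1 hb with rfl | hb
              · exact mem_range.2 (lt_trans hilt (mem_range.1 (hB₀sub hj₀)))
              · exact hB₀sub (mem_of_mem_erase hb)
            · rw [card_insert_of_notMem (fun h => hi₀ (mem_of_mem_erase h)),
                card_erase_of_mem hj₀, hB₀card]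
              have : 1 ≤ k := by
                rw [← hB₀card]
                exact card_pos.2 ⟨j, hj₀⟩
              omega
      have hm₁ : fmeas F₁ ≤ m := by omega
      obtain ⟨F', h1, h2, h3, h4, h5⟩ := ih F₁ hm₁ hsub
      refine ⟨F', h1, h2, ?_, ?_, ?_⟩
      · rw [h3, hF₁def, UV.card_compression]
      · refine le_trans h4 ?_
        refine UV.card_shadow_compression_le _ _ ?_
        intro x hx
        rw [mem_singleton] at hx
        subst hx
        refine ⟨j, mem_singleton_self j, ?_⟩
        simp only [erase_singleton]
        exact UV.isCompressed_self _ _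
      · intro M hM hd
        obtain ⟨M₁, hM₁, hd₁, hc₁⟩ := h5 M hM hd
        obtain ⟨M', hM', hd', hc'⟩ := matching_compression hilt.ne F M₁ hM₁ hd₁
        exact ⟨M', hM', hd', by rw [hc', hc₁]⟩

lemma exists_shifted (n k : ℕ) (F : Finset (Finset ℕ)) (hF : F ⊆ (range n).powersetCard k) :
    ∃ F', F' ⊆ (range n).powersetCard k ∧ Shifted F' ∧ F'.card = F.card ∧
      (∂ F').card ≤ (∂ F).card ∧
      ∀ M ⊆ F', (M : Set (Finset ℕ)).PairwiseDisjoint id →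
        ∃ M' ⊆ F, (M' : Set (Finset ℕ)).PairwiseDisjoint id ∧ M'.card = M.card :=
  exists_shifted_aux n k (fmeas F) F (le_refl _) hF



lemma card_pairs (H : Finset (Finset ℕ)) (t : Finset ℕ → Finset ℕ) :
    (H.biUnion fun A => (t A).image fun a => (A, a)).card = ∑ A ∈ H, (t A).card := by
  rw [card_biUnion]
  · exact Finset.sum_congr rfl fun A hA => card_image_of_injective _ (fun a b h => (Prod.mk.injEq _ _ _ _ ▸ h).2)
  · intro A hA B hB hAB
    rw [Function.onFun, disjoint_left]
    rintro ⟨X, x⟩ hX hY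
    obtain ⟨a, -, ha⟩ := mem_image.1 hX
    obtain ⟨b, -, hb⟩ := mem_image.1 hY
    rw [Prod.mk.injEq] at ha hb
    exact hAB (ha.1.trans hb.1.symm)

lemma local_lym (n k : ℕ) (hk : 1 ≤ k) (F : Finset (Finset ℕ))
    (hF : F ⊆ (range n).powersetCard k) :
    F.card * k ≤ (∂ F).card * (n - k + 1) := by
  classical
  rcases F.eq_empty_or_nonempty with rfl | ⟨A₀, hA₀⟩
  · simp
  have hA₀' := mem_powersetCard.1 (hF hA₀)
  have hkn : k ≤ n := by
    have := card_le_card hA₀'.1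
    rwa [hA₀'.2, card_range] at this
  have hcard : ∀ A ∈ F, A.card = k := fun A hA => (mem_powersetCard.1 (hF hA)).2
  have hsubr : ∀ A ∈ F, A ⊆ range n := fun A hA => (mem_powersetCard.1 (hF hA)).1
  have hshadow : ∀ G ∈ ∂ F, G.card = k - 1 ∧ G ⊆ range n := by
    intro G hG
    obtain ⟨A, hA, a, ha, rfl⟩ := mem_shadow_iff.1 hG
    refine ⟨by rw [card_erase_of_mem ha, hcard A hA], ?_⟩
    exact fun b hb => hsubr A hA (mem_of_mem_erase hb)
  have h1 : (F.biUnion fun A => A.image fun a => (A, a)).card = F.card * k := by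
    rw [card_pairs F (fun A => A)]
    rw [Finset.sum_congr rfl hcard, sum_const, smul_eq_mul]
  have h2 : ((∂ F).biUnion fun G => (range n \ G).image fun b => (G, b)).card
      = (∂ F).card * (n - k + 1) := by
    rw [card_pairs (∂ F) (fun G => range n \ G)]
    rw [Finset.sum_congr rfl (fun G hG => ?_), sum_const, smul_eq_mul]
    obtain ⟨hGc, hGr⟩ := hshadow G hG
    rw [card_sdiff_of_subset hGr, card_range, hGc]
    omega
  rw [← h1, ← h2]
  refine card_le_card_of_injOn (fun p => (p.1.erase p.2, p.2)) ?_ ?_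
  · rintro ⟨A, a⟩ hp
    simp only [mem_coe, mem_biUnion, mem_image] at hp
    obtain ⟨A', hA', a', ha', heq⟩ := hp
    rw [Prod.mk.injEq] at heq
    obtain ⟨rfl, rfl⟩ := heq
    simp only [mem_coe, mem_biUnion, mem_image]
    exact ⟨A'.erase a', erase_mem_shadow hA' ha', a',
      mem_sdiff.2 ⟨mem_range.2 (mem_range.1 (hsubr A' hA' ha')), notMem_erase _ _⟩, rfl⟩
  · rintro ⟨A, a⟩ hp ⟨B, b⟩ hq h
    simp only [coe_biUnion, Set.mem_iUnion, mem_coe, mem_image] at hp hq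
    obtain ⟨A', hA', a', ha', heq⟩ := hp
    rw [Prod.mk.injEq] at heq
    obtain ⟨rfl, rfl⟩ := heq
    obtain ⟨B', hB', b', hb', heq⟩ := hq
    rw [Prod.mk.injEq] at heq
    obtain ⟨rfl, rfl⟩ := heq
    rw [Prod.mk.injEq] at h
    obtain ⟨h1', rfl⟩ := h
    have : A' = B' := by
      rw [← insert_erase ha', h1', insert_erase hb']
    subst this
    rfl





theorem shifted_bound : ∀ (k n s : ℕ) (F : Finset (Finset ℕ)), 1 ≤ k →
    F ⊆ (range n).powersetCard k → Shifted F →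
    (∀ M ⊆ F, (M : Set (Finset ℕ)).PairwiseDisjoint id → M.card ≤ s) →
    F.card ≤ s * (∂ F).card := by
  intro k
  induction k using Nat.strong_induction_on with
  | _ k ihk =>
  intro n
  induction n using Nat.strong_induction_on with
  | _ n ihn =>
  intro s F hk hF hsh hmax
  classical
  rcases F.eq_empty_or_nonempty with rfl | ⟨A₀, hA₀⟩
  · simp
  have hA₀' := mem_powersetCard.1 (hF hA₀)
  have hkn : k ≤ n := by
    have := card_le_card hA₀'.1
    rwa [hA₀'.2, card_range] at this
  have hs1 : 1 ≤ s := by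
    have := hmax {A₀} (by simpa using hA₀) (by
      intro a ha b hb hab
      simp only [coe_singleton, Set.mem_singleton_iff] at ha hb
      exact absurd (ha.trans hb.symm) hab)
    simpa using this
  have hcard : ∀ A ∈ F, A.card = k := fun A hA => (mem_powersetCard.1 (hF hA)).2
  have hsubr : ∀ A ∈ F, A ⊆ range n := fun A hA => (mem_powersetCard.1 (hF hA)).1
  -- case k = 1
  rcases eq_or_lt_of_le hk with hk1 | hk2
  · -- k = 1 : F is a family of singletons, hence itself a matching
    have hpd : (F : Set (Finset ℕ)).PairwiseDisjoint id := by
      intro a ha b hb hab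
      simp only [mem_coe] at ha hb
      simp only [Function.onFun, id_eq]
      rw [disjoint_left]
      intro c hca hcb
      obtain ⟨u, hu⟩ := card_eq_one.1 ((hcard a ha).trans hk1.symm)
      obtain ⟨v, hv⟩ := card_eq_one.1 ((hcard b hb).trans hk1.symm)
      apply hab
      rw [hu, mem_singleton] at hca
      rw [hv, mem_singleton] at hcb
      rw [hu, hv, ← hca, ← hcb]
    have hFs : F.card ≤ s := hmax F Subset.rfl hpd
    obtain ⟨a, ha⟩ := card_eq_one.1 ((hcard A₀ hA₀).trans hk1.symm)
    have hshad : ∅ ∈ ∂ F := by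
      have := erase_mem_shadow hA₀ (ha ▸ mem_singleton_self a)
      simpa [ha] using this
    have : 1 ≤ (∂ F).card := card_pos.2 ⟨∅, hshad⟩
    calc F.card ≤ s := hFs
      _ = s * 1 := (mul_one s).symm
      _ ≤ s * (∂ F).card := Nat.mul_le_mul_left s this
  by_cases hn : n < s * k + k
  · -- small ground set: local LYM suffices
    have h1 := local_lym n k hk F hF
    have h2 : (∂ F).card * (n - k + 1) ≤ (∂ F).card * (s * k) :=
      Nat.mul_le_mul_left _ (by omega)
    have h3 : (∂ F).card * (s * k) = (s * (∂ F).card) * k := by ring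
    exact Nat.le_of_mul_le_mul_right (h1.trans (h2.trans_eq h3)) (by omega)
  · push_neg at hn
    have hsk : k ≤ s * k := Nat.le_mul_of_pos_left k (by omega)
    set x := n - 1 with hxdef
    have hxn : x < n := by omega
    -- deletion and link at the top element x
    set D : Finset (Finset ℕ) := F.filter (fun A => x ∉ A) with hDdef
    set Fx : Finset (Finset ℕ) := F.filter (fun A => x ∈ A) with hFxdef
    set L : Finset (Finset ℕ) := Fx.image (fun A => A.erase x) with hLdef
    have hDF : D ⊆ F := filter_subset _ _
    have hLmem : ∀ G ∈ L, x ∉ G ∧ insert x G ∈ F := by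
      intro G hG
      obtain ⟨A, hA, rfl⟩ := mem_image.1 hG
      obtain ⟨hAF, hxA⟩ := mem_filter.1 hA
      exact ⟨notMem_erase _ _, by rwa [insert_erase hxA]⟩
    have hcardF : F.card = D.card + L.card := by
      have h1 : Fx.card + D.card = F.card := by
        rw [hFxdef, hDdef]
        exact card_filter_add_card_filter_not _
      have h2 : L.card = Fx.card := by
        rw [hLdef]
        refine card_image_of_injOn ?_
        intro A hA B hB h
        simp only [mem_coe] at hA hB
        have hxA := (mem_filter.1 hA).2
        have hxB := (mem_filter.1 hB).2
        rw [← insert_erase hxA, show A.erase x = B.erase x from h, insert_erase hxB]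
      omega
    have hDsub : D ⊆ (range x).powersetCard k := by
      intro A hA
      obtain ⟨hAF, hxA⟩ := mem_filter.1 hA
      rw [mem_powersetCard]
      refine ⟨?_, hcard A hAF⟩
      intro b hb
      have := mem_range.1 (hsubr A hAF hb)
      have : b ≠ x := fun h => hxA (h ▸ hb)
      rw [mem_range]
      omega
    have hLsub : L ⊆ (range x).powersetCard (k - 1) := by
      intro G hG
      obtain ⟨A, hA, rfl⟩ := mem_image.1 hG
      obtain ⟨hAF, hxA⟩ := mem_filter.1 hA
      rw [mem_powersetCard]
      constructor
      · intro b hb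
        have hbx := ne_of_mem_erase hb
        have := mem_range.1 (hsubr A hAF (mem_of_mem_erase hb))
        rw [mem_range]
        omega
      · rw [card_erase_of_mem hxA, hcard A hAF]
    have hDsh : Shifted D := by
      intro A hA j hj i hij hiA
      obtain ⟨hAF, hxA⟩ := mem_filter.1 hA
      have hjx : j ≠ x := fun h => hxA (h ▸ hj)
      have hjn := mem_range.1 (hsubr A hAF hj)
      rw [hDdef, mem_filter]
      refine ⟨hsh A hAF j hj i hij hiA, ?_⟩
      intro hx
      rcases mem_insert.1 hx with h | h
      · omega
      · exact hxA (mem_of_mem_erase h)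
    have hLsh : Shifted L := by
      intro G hG j hj i hij hiG
      obtain ⟨hxG, hAF⟩ := hLmem G hG
      have hjx : j < x := by
        have := mem_powersetCard.1 (hLsub hG)
        exact mem_range.1 (this.1 hj)
      have hiA : i ∉ insert x G := by
        rw [mem_insert]
        push_neg
        exact ⟨by omega, hiG⟩
      have hB := hsh (insert x G) hAF j (mem_insert_of_mem hj) i hij hiA
      have hxB : x ∈ insert i ((insert x G).erase j) :=
        mem_insert_of_mem (mem_erase.2 ⟨by omega, mem_insert_self _ _⟩)
      rw [hLdef, mem_image]
      refine ⟨insert i ((insert x G).erase j), mem_filter.2 ⟨hB, hxB⟩, ?_⟩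
      have hix : i ≠ x := by omega
      rw [erase_insert_of_ne hix, erase_right_comm, erase_insert hxG]
    -- the link has no matching of size s+1
    have hmaxL : ∀ M ⊆ L, (M : Set (Finset ℕ)).PairwiseDisjoint id → M.card ≤ s := by
      intro M hML hdM
      by_contra hsM
      push_neg at hsM
      obtain ⟨M', hM'M, hM'card⟩ := exists_subset_card_eq (s := M) (n := s + 1) (by omega)
      have hd' : (M' : Set (Finset ℕ)).PairwiseDisjoint id :=
        hdM.subset (by exact_mod_cast hM'M)
      set U : Finset ℕ := M'.biUnion id with hUdef
      have hUcard : U.card ≤ (s + 1) * (k - 1) := by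
        refine (card_biUnion_le).trans ?_
        have : ∀ G ∈ M', (id G : Finset ℕ).card = k - 1 := by
          intro G hG
          exact (mem_powersetCard.1 (hLsub (hML (hM'M hG)))).2
        rw [Finset.sum_congr rfl this, sum_const, smul_eq_mul, hM'card]
      have hUr : U ⊆ range n := by
        intro b hb
        obtain ⟨G, hG, hbG⟩ := mem_biUnion.1 hb
        have := (mem_powersetCard.1 (hLsub (hML (hM'M hG)))).1 hbG
        rw [mem_range] at this ⊢
        omega
      have he1 : (s + 1) * (k - 1) + (s + 1) = (s + 1) * k := by
        have hk' : k - 1 + 1 = k := by omega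
        calc (s + 1) * (k - 1) + (s + 1) = (s + 1) * ((k - 1) + 1) := by ring
          _ = (s + 1) * k := by rw [hk']
      have he2 : (s + 1) * k = s * k + k := by ring
      have hWcard : s + 1 ≤ (range n \ U).card := by
        rw [card_sdiff_of_subset hUr, card_range]
        omega
      obtain ⟨W', hW'W, hW'card⟩ := exists_subset_card_eq hWcard
      have ecard : M'.card = W'.card := by rw [hM'card, hW'card]
      set e := equivOfCardEq ecard with hedef
      have hyfresh : ∀ (g : {G // G ∈ M'}), ((e g : ℕ)) ∈ range n ∧
          ∀ G ∈ M', ((e g : ℕ)) ∉ G := by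
        intro g
        have := hW'W (e g).2
        rw [mem_sdiff] at this
        exact ⟨this.1, fun G hG hyG => this.2 (mem_biUnion.2 ⟨G, hG, hyG⟩)⟩
      set φ : {G // G ∈ M'} → Finset ℕ := fun g => insert ((e g : ℕ)) (g : Finset ℕ) with hφdef
      have hφF : ∀ g, φ g ∈ F := by
        intro g
        obtain ⟨hxG, hAF⟩ := hLmem (g : Finset ℕ) (hML (hM'M g.2))
        set y := ((e g : ℕ)) with hydef
        have hyn : y < n := mem_range.1 (hyfresh g).1
        have hyG : y ∉ (g : Finset ℕ) := (hyfresh g).2 _ g.2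
        by_cases hyx : y = x
        · show insert y (g : Finset ℕ) ∈ F
          rw [hyx]; exact hAF
        · have hyx' : y < x := by omega
          have := hsh (insert x (g : Finset ℕ)) hAF x (mem_insert_self _ _) y hyx'
            (by rw [mem_insert]; push_neg; exact ⟨hyx, hyG⟩)
          rwa [erase_insert hxG] at this
      have hφdisj : ∀ g g' : {G // G ∈ M'}, (g : Finset ℕ) ≠ (g' : Finset ℕ) →
          Disjoint (φ g) (φ g') := by
        intro g g' hne
        rw [disjoint_left]
        intro b hb hb'
        rcases mem_insert.1 hb with rfl | hbG
        · rcases mem_insert.1 hb' with heq | hbG'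
          · have : e g = e g' := Subtype.ext heq
            exact hne (congrArg Subtype.val (e.injective this))
          · exact (hyfresh g).2 _ g'.2 hbG'
        · rcases mem_insert.1 hb' with heq | hbG'
          · exact (hyfresh g').2 _ g.2 (heq ▸ hbG)
          · exact disjoint_left.1 (hd' (by exact_mod_cast g.2) (by exact_mod_cast g'.2)
              (fun h => hne (by rw [h]))) hbG hbG'
      have hφinj : Set.InjOn φ ↑M'.attach := by
        intro g hg g' hg' h
        by_contra hne
        have hvne : (g : Finset ℕ) ≠ (g' : Finset ℕ) := fun hv => hne (Subtype.ext hv)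
        have := hφdisj g g' hvne
        rw [h, disjoint_self] at this
        have : φ g' = ∅ := by simpa [bot_eq_empty] using this
        exact absurd this (by simp [hφdef])
      set N : Finset (Finset ℕ) := M'.attach.image φ with hNdef
      have hNcard : N.card = s + 1 := by
        rw [hNdef, card_image_of_injOn hφinj, card_attach, hM'card]
      have hNF : N ⊆ F := by
        intro B hB
        obtain ⟨g, -, rfl⟩ := mem_image.1 hB
        exact hφF g
      have hNpd : (N : Set (Finset ℕ)).PairwiseDisjoint id := by
        intro a ha b hb hab
        simp only [hNdef, coe_image, Set.mem_image, mem_coe] at ha hb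
        obtain ⟨g, -, rfl⟩ := ha
        obtain ⟨g', -, rfl⟩ := hb
        refine hφdisj g g' ?_
        intro hv
        exact hab (congrArg φ (Subtype.ext hv))
      have := hmax N hNF hNpd
      omega
    -- the link is contained in the shadow of the deletion
    have hLD : L ⊆ ∂ D := by
      intro G hG
      obtain ⟨hxG, hAF⟩ := hLmem G hG
      have hGcard : G.card = k - 1 := (mem_powersetCard.1 (hLsub hG)).2
      have hGr : G ⊆ range x := (mem_powersetCard.1 (hLsub hG)).1
      have hne : (range x \ G).Nonempty := by
        rw [← card_pos, card_sdiff_of_subset hGr, card_range, hGcard]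
        omega
      obtain ⟨y, hy⟩ := hne
      rw [mem_sdiff, mem_range] at hy
      obtain ⟨hyx, hyG⟩ := hy
      have hins : insert y G ∈ F := by
        have := hsh (insert x G) hAF x (mem_insert_self _ _) y hyx
          (by rw [mem_insert]; push_neg; exact ⟨by omega, hyG⟩)
        rwa [erase_insert hxG] at this
      have hinsD : insert y G ∈ D := by
        rw [hDdef, mem_filter]
        refine ⟨hins, ?_⟩
        rw [mem_insert]
        push_neg
        exact ⟨by omega, hxG⟩
      have := erase_mem_shadow hinsD (mem_insert_self y G)
      rwa [erase_insert hyG] at this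
    -- shadow decomposition
    have hshadD : ∂ D ⊆ ∂ F := shadow_mono hDF
    have hnoxD : ∀ G ∈ ∂ D, x ∉ G := by
      intro G hG hxG
      obtain ⟨A, hA, a, ha, rfl⟩ := mem_shadow_iff.1 hG
      exact (mem_filter.1 hA).2 (mem_of_mem_erase hxG)
    have hinsL : ∀ G ∈ ∂ L, x ∉ G ∧ insert x G ∈ ∂ F := by
      intro G hG
      obtain ⟨B, hB, b, hb, rfl⟩ := mem_shadow_iff.1 hG
      obtain ⟨hxB, hAF⟩ := hLmem B hB
      have hbx : b ≠ x := fun h => hxB (h ▸ hb)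
      refine ⟨fun h => hxB (mem_of_mem_erase h), ?_⟩
      have := erase_mem_shadow hAF (mem_insert_of_mem hb : b ∈ insert x B)
      rwa [erase_insert_of_ne (Ne.symm hbx)] at this
    have hshadcount : (∂ D).card + (∂ L).card ≤ (∂ F).card := by
      have hsub : ∂ D ∪ (∂ L).image (insert x) ⊆ ∂ F := by
        intro G hG
        rcases mem_union.1 hG with hG | hG
        · exact hshadD hG
        · obtain ⟨G', hG', rfl⟩ := mem_image.1 hG
          exact (hinsL G' hG').2
      have hdisj : Disjoint (∂ D) ((∂ L).image (insert x)) := by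
        rw [disjoint_left]
        intro G hG hG'
        obtain ⟨G', hG'', rfl⟩ := mem_image.1 hG'
        exact hnoxD _ hG (mem_insert_self _ _)
      have himg : ((∂ L).image (insert x)).card = (∂ L).card := by
        refine card_image_of_injOn ?_
        intro G hG G' hG' h
        have h1 : x ∉ G := (hinsL G hG).1
        have h2 : x ∉ G' := (hinsL G' hG').1
        rw [← erase_insert h1, h, erase_insert h2]
      calc (∂ D).card + (∂ L).card = (∂ D ∪ (∂ L).image (insert x)).card := by
            rw [card_union_of_disjoint hdisj, himg]
        _ ≤ (∂ F).card := card_le_card hsub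
    -- induction hypotheses
    have hDbound : D.card ≤ s * (∂ D).card :=
      ihn x hxn s D hk hDsub hDsh (fun M hM hd => hmax M (hM.trans hDF) hd)
    have hLbound : L.card ≤ s * (∂ L).card :=
      ihk (k - 1) (by omega) x s L (by omega) hLsub hLsh hmaxL
    calc F.card = D.card + L.card := hcardF
      _ ≤ s * (∂ D).card + s * (∂ L).card := Nat.add_le_add hDbound hLbound
      _ = s * ((∂ D).card + (∂ L).card) := by ring
      _ ≤ s * (∂ F).card := Nat.mul_le_mul_left s hshadcount






lemma shadow_eq (n k : ℕ) (hk : 1 ≤ k) (F : Finset (Finset ℕ))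
    (hF : F ⊆ (range n).powersetCard k) :
    ((range n).powersetCard (k - 1)).filter (fun G => ∃ f ∈ F, G ⊆ f) = ∂ F := by
  ext G
  rw [mem_filter, mem_powersetCard, mem_shadow_iff_exists_sdiff]
  constructor
  · rintro ⟨⟨hGr, hGc⟩, f, hf, hGf⟩
    refine ⟨f, hf, hGf, ?_⟩
    rw [card_sdiff_of_subset hGf, hGc, (mem_powersetCard.1 (hF hf)).2]
    omega
  · rintro ⟨f, hf, hGf, hc⟩
    obtain ⟨hfr, hfc⟩ := mem_powersetCard.1 (hF hf)
    have h1 : G.card ≤ f.card := card_le_card hGf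
    have h2 := card_sdiff_of_subset hGf
    refine ⟨⟨hGf.trans hfr, by omega⟩, f, hf, hGf⟩

end Frankl21

theorem stmt_4 (n k s : ℕ)
    (F : Finset (Finset ℕ)) (hF : F ⊆ (Finset.range n).powersetCard k)
    (hmatch : ∃ M ⊆ F, (M : Set (Finset ℕ)).PairwiseDisjoint id ∧ M.card = s)
    (hmax : ∀ M ⊆ F, (M : Set (Finset ℕ)).PairwiseDisjoint id → M.card ≤ s) :
    F.card ≤ s * (((Finset.range n).powersetCard (k - 1)).filter
      fun G => ∃ f ∈ F, G ⊆ f).card := by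
  classical
  by_cases hk0 : k = 0
  · subst hk0
    rcases F.eq_empty_or_nonempty with rfl | ⟨A, hA⟩
    · simp
    have hFsub : F ⊆ {∅} := by
      intro B hB
      have := hF hB
      rw [Finset.powersetCard_zero] at this
      exact this
    have hs1 : 1 ≤ s := by
      have := hmax {A} (by simpa using hA) (by
        intro a ha b hb hab
        simp only [Finset.coe_singleton, Set.mem_singleton_iff] at ha hb
        exact absurd (ha.trans hb.symm) hab)
      simpa using this
    have hA0 : A = ∅ := Finset.mem_singleton.1 (hFsub hA)
    have hF1 : F.card ≤ 1 := by
      calc F.card ≤ ({∅} : Finset (Finset ℕ)).card := Finset.card_le_card hFsub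
        _ = 1 := Finset.card_singleton _
    have hmem : (∅ : Finset ℕ) ∈ ((Finset.range n).powersetCard (0 - 1)).filter
        (fun G => ∃ f ∈ F, G ⊆ f) := by
      rw [Finset.mem_filter]
      constructor
      · simp [Finset.mem_powersetCard]
      · exact ⟨A, hA, by simp [hA0]⟩
    have : 1 ≤ (((Finset.range n).powersetCard (0 - 1)).filter
        (fun G => ∃ f ∈ F, G ⊆ f)).card := Finset.card_pos.2 ⟨∅, hmem⟩
    calc F.card ≤ 1 := hF1
      _ ≤ s * 1 := by omega
      _ ≤ _ := Nat.mul_le_mul_left s this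
  · have hk : 1 ≤ k := by omega
    obtain ⟨F', h1, h2, h3, h4, h5⟩ := Frankl21.exists_shifted n k F hF
    have hmax' : ∀ M ⊆ F', (M : Set (Finset ℕ)).PairwiseDisjoint id → M.card ≤ s := by
      intro M hM hd
      obtain ⟨M', hM1, hM2, hM3⟩ := h5 M hM hd
      rw [← hM3]
      exact hmax M' hM1 hM2
    have hbound := Frankl21.shifted_bound k n s F' hk h1 h2 hmax'
    rw [Frankl21.shadow_eq n k hk F hF]
    calc F.card = F'.card := h3.symm
      _ ≤ s * (∂ F').card := hbound
      _ ≤ s * (∂ F).card := Nat.mul_le_mul_left s h4
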